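/- The n-dimensional kernel Φ(τ,Y,a,B) satisfies Φ(τ,Y,a,B) ≤ (4πτ)^{-n/2}·det(Θ/sinh Θ)^{1/2}·exp{-(1/(8τ))·Y(Θ(cosh Θ + 1)/sinh Θ)Yᵀ} for all Y ∈ ℝⁿ, a ∈ ℝⁿ, n×n matrices B, and τ > 0. -/

import Mathlib

open Real Matrix

/-- Apply a scalar function spectrally, via an orthogonal diagonalization. -/
noncomputable def matFun {n : ℕ} (U : Matrix (Fin n) (Fin n) ℝ) (d : Fin n → ℝ)
    (f : ℝ → ℝ) : Matrix (Fin n) (Fin n) ℝ :=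
  U * Matrix.diagonal (fun i => f (d i)) * Uᵀ

/-- `x / sinh x`, extended by its limit `1` at `x = 0`. -/
noncomputable def xDivSinh (x : ℝ) : ℝ := if x = 0 then 1 else x / Real.sinh x

/-- `x cosh x / sinh x`, extended by its limit `1` at `x = 0`. -/
noncomputable def xCoshDivSinh (x : ℝ) : ℝ :=
  if x = 0 then 1 else x * Real.cosh x / Real.sinh x

/-- `(cosh x - 1)/(x sinh x)`, extended by its limit `1/2` at `x = 0`. -/
noncomputable def coshSubOneDivXSinh (x : ℝ) : ℝ :=
  if x = 0 then 1 / 2 else (Real.cosh x - 1) / (x * Real.sinh x)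

/-- `x (cosh x + 1) / sinh x`, extended by its limit `2` at `x = 0`. -/
noncomputable def xCoshAddOneDivSinh (x : ℝ) : ℝ :=
  if x = 0 then 2 else x * (Real.cosh x + 1) / Real.sinh x

namespace PhiAux

variable {n : ℕ}

lemma matFun_congr (U : Matrix (Fin n) (Fin n) ℝ) (d : Fin n → ℝ) {F G : ℝ → ℝ}
    (h : ∀ i, F (d i) = G (d i)) : matFun U d F = matFun U d G := by
  unfold matFun
  rw [show (fun i => F (d i)) = (fun i => G (d i)) from funext h]

lemma matFun_mul (U : Matrix (Fin n) (Fin n) ℝ) (d : Fin n → ℝ) (hU' : Uᵀ * U = 1)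
    (F G : ℝ → ℝ) :
    matFun U d F * matFun U d G = matFun U d (fun x => F x * G x) := by
  unfold matFun
  have h : U * Matrix.diagonal (fun i => F (d i)) * Uᵀ *
      (U * Matrix.diagonal (fun i => G (d i)) * Uᵀ)
      = U * (Matrix.diagonal (fun i => F (d i)) *
        ((Uᵀ * U) * (Matrix.diagonal (fun i => G (d i)) * Uᵀ))) := by
    simp only [Matrix.mul_assoc]
  rw [h, hU', Matrix.one_mul, ← Matrix.mul_assoc (Matrix.diagonal _),
    Matrix.diagonal_mul_diagonal, Matrix.mul_assoc]

lemma matFun_transpose (U : Matrix (Fin n) (Fin n) ℝ) (d : Fin n → ℝ) (F : ℝ → ℝ) :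
    (matFun U d F)ᵀ = matFun U d F := by
  unfold matFun
  rw [Matrix.transpose_mul, Matrix.transpose_mul, Matrix.transpose_transpose,
    Matrix.diagonal_transpose, Matrix.mul_assoc]

lemma matFun_add (U : Matrix (Fin n) (Fin n) ℝ) (d : Fin n → ℝ) (F G : ℝ → ℝ) :
    matFun U d (fun x => F x + G x) = matFun U d F + matFun U d G := by
  unfold matFun
  rw [show Matrix.diagonal (fun i => F (d i) + G (d i))
      = Matrix.diagonal (fun i => F (d i)) + Matrix.diagonal (fun i => G (d i)) by
    rw [← Matrix.diagonal_add]]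
  rw [Matrix.mul_add, Matrix.add_mul]

lemma matFun_smul (U : Matrix (Fin n) (Fin n) ℝ) (d : Fin n → ℝ) (c : ℝ) (F : ℝ → ℝ) :
    matFun U d (fun x => c * F x) = c • matFun U d F := by
  unfold matFun
  rw [show Matrix.diagonal (fun i => c * F (d i))
      = c • Matrix.diagonal (fun i => F (d i)) by
    rw [← Matrix.diagonal_smul]; rfl]
  rw [Matrix.mul_smul, Matrix.smul_mul]

lemma matFun_sub (U : Matrix (Fin n) (Fin n) ℝ) (d : Fin n → ℝ) (F G : ℝ → ℝ) :
    matFun U d (fun x => F x - G x) = matFun U d F - matFun U d G := by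
  have := matFun_add U d (fun x => F x - G x) G
  simp only [sub_add_cancel] at this
  rw [this]; abel

lemma matFun_zero (U : Matrix (Fin n) (Fin n) ℝ) (d : Fin n → ℝ) :
    matFun U d (fun _ => 0) = 0 := by
  unfold matFun
  rw [show Matrix.diagonal (fun _ : Fin n => (0:ℝ)) = 0 from Matrix.diagonal_zero,
    Matrix.mul_zero, Matrix.zero_mul]

lemma matFun_const (U : Matrix (Fin n) (Fin n) ℝ) (d : Fin n → ℝ) (hU : U * Uᵀ = 1) (c : ℝ) :
    matFun U d (fun _ => c) = c • 1 := by
  have h1 : matFun U d (fun x => c * 1) = c • matFun U d (fun _ => 1) := matFun_smul U d c _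
  have h2 : matFun U d (fun _ : ℝ => (1:ℝ)) = 1 := by
    unfold matFun
    rw [show Matrix.diagonal (fun _ : Fin n => (1:ℝ)) = 1 from Matrix.diagonal_one,
      Matrix.mul_one, hU]
  simpa [h2] using h1

lemma matFun_quad (U : Matrix (Fin n) (Fin n) ℝ) (d : Fin n → ℝ) (F : ℝ → ℝ) (x : Fin n → ℝ) :
    x ⬝ᵥ (matFun U d F *ᵥ x) = ∑ i, F (d i) * ((Uᵀ *ᵥ x) i)^2 := by
  unfold matFun
  rw [← Matrix.mulVec_mulVec, ← Matrix.mulVec_mulVec, Matrix.dotProduct_mulVec,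
    ← Matrix.mulVec_transpose]
  simp only [dotProduct, Matrix.mulVec_diagonal]
  exact Finset.sum_congr rfl fun i _ => by ring

lemma dot_self_nonneg (v : Fin n → ℝ) : 0 ≤ v ⬝ᵥ v :=
  Finset.sum_nonneg fun i _ => mul_self_nonneg (v i)

lemma dot_mulVec_cross (M : Matrix (Fin n) (Fin n) ℝ) (x y : Fin n → ℝ) :
    (M *ᵥ x) ⬝ᵥ y = x ⬝ᵥ (Mᵀ *ᵥ y) := by
  rw [dotProduct_comm, Matrix.dotProduct_mulVec, ← Matrix.mulVec_transpose,
    dotProduct_comm]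

lemma dot_mulVec_self (M : Matrix (Fin n) (Fin n) ℝ) (x : Fin n → ℝ) :
    (M *ᵥ x) ⬝ᵥ (M *ᵥ x) = x ⬝ᵥ ((Mᵀ * M) *ᵥ x) := by
  rw [dot_mulVec_cross, Matrix.mulVec_mulVec]

lemma matFun_sq_comm (τ : ℝ) (B U V : Matrix (Fin n) (Fin n) ℝ) (d e : Fin n → ℝ)
    (hU : U * Uᵀ = 1) (hV : V * Vᵀ = 1)
    (hΘ : (U * Matrix.diagonal d * Uᵀ) ^ 2 = (4 * τ ^ 2) • (B * Bᵀ))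
    (hΘs : (V * Matrix.diagonal e * Vᵀ) ^ 2 = (4 * τ ^ 2) • (Bᵀ * B))
    (P : Polynomial ℝ) :
    matFun U d (fun x => P.eval (x ^ 2)) * B = B * matFun V e (fun x => P.eval (x ^ 2)) := by
  have hU' : Uᵀ * U = 1 := mul_eq_one_comm.mp hU
  have hV' : Vᵀ * V = 1 := mul_eq_one_comm.mp hV
  have hid : matFun U d id = U * Matrix.diagonal d * Uᵀ := rfl
  have hid' : matFun V e id = V * Matrix.diagonal e * Vᵀ := rfl
  have hsqU : matFun U d (fun x => x ^ 2) = (4 * τ ^ 2) • (B * Bᵀ) := by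
    rw [← hΘ, ← hid, pow_two, matFun_mul U d hU']
    exact matFun_congr U d fun i => by simp [pow_two]
  have hsqV : matFun V e (fun x => x ^ 2) = (4 * τ ^ 2) • (Bᵀ * B) := by
    rw [← hΘs, ← hid', pow_two, matFun_mul V e hV']
    exact matFun_congr V e fun i => by simp [pow_two]
  induction P using Polynomial.induction_on with
  | C c =>
      simp only [Polynomial.eval_C]
      rw [matFun_const U d hU c, matFun_const V e hV c, Matrix.smul_mul, Matrix.mul_smul,
        Matrix.one_mul, Matrix.mul_one]
  | add p q hp hq =>
      simp only [Polynomial.eval_add]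
      rw [matFun_add, matFun_add, Matrix.add_mul, Matrix.mul_add, hp, hq]
  | monomial k c ih =>
      have hfU : matFun U d (fun x => Polynomial.eval (x ^ 2) (Polynomial.C c *
          Polynomial.X ^ (k + 1)))
          = matFun U d (fun x => Polynomial.eval (x ^ 2) (Polynomial.C c * Polynomial.X ^ k)) *
            matFun U d (fun x => x ^ 2) := by
        rw [matFun_mul U d hU']
        exact matFun_congr U d fun i => by
          simp [Polynomial.eval_mul, Polynomial.eval_pow]; ring
      have hfV : matFun V e (fun x => Polynomial.eval (x ^ 2) (Polynomial.C c *
          Polynomial.X ^ (k + 1)))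
          = matFun V e (fun x => Polynomial.eval (x ^ 2) (Polynomial.C c * Polynomial.X ^ k)) *
            matFun V e (fun x => x ^ 2) := by
        rw [matFun_mul V e hV']
        exact matFun_congr V e fun i => by
          simp [Polynomial.eval_mul, Polynomial.eval_pow]; ring
      rw [hfU, hfV, hsqU, hsqV]
      have h1 : (matFun U d fun x => Polynomial.eval (x ^ 2) (Polynomial.C c * Polynomial.X ^ k)) *
          ((4 * τ ^ 2) • (B * Bᵀ)) * B =
          (4 * τ ^ 2) • (((matFun U d fun x => Polynomial.eval (x ^ 2)
            (Polynomial.C c * Polynomial.X ^ k)) * B) * (Bᵀ * B)) := by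
        simp only [Matrix.mul_smul, Matrix.smul_mul, Matrix.mul_assoc]
      have h2 : B * ((matFun V e fun x => Polynomial.eval (x ^ 2)
            (Polynomial.C c * Polynomial.X ^ k)) * ((4 * τ ^ 2) • (Bᵀ * B))) =
          (4 * τ ^ 2) • ((B * matFun V e fun x => Polynomial.eval (x ^ 2)
            (Polynomial.C c * Polynomial.X ^ k)) * (Bᵀ * B)) := by
        simp only [Matrix.mul_smul, Matrix.smul_mul, Matrix.mul_assoc]
      rw [h1, h2, ih]

lemma matFun_comm (τ : ℝ) (B U V : Matrix (Fin n) (Fin n) ℝ) (d e : Fin n → ℝ)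
    (hU : U * Uᵀ = 1) (hV : V * Vᵀ = 1)
    (hd : ∀ i, 0 ≤ d i) (he : ∀ i, 0 ≤ e i)
    (hΘ : (U * Matrix.diagonal d * Uᵀ) ^ 2 = (4 * τ ^ 2) • (B * Bᵀ))
    (hΘs : (V * Matrix.diagonal e * Vᵀ) ^ 2 = (4 * τ ^ 2) • (Bᵀ * B))
    (F : ℝ → ℝ) : matFun U d F * B = B * matFun V e F := by
  classical
  set s : Finset ℝ :=
    (Finset.univ.image fun i => d i ^ 2) ∪ (Finset.univ.image fun i => e i ^ 2) with hs
  set P : Polynomial ℝ := Lagrange.interpolate s id (fun t => F (Real.sqrt t)) with hP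
  have hinj : Set.InjOn id (s : Set ℝ) := Function.injective_id.injOn
  have hPd : ∀ i, P.eval (d i ^ 2) = F (d i) := by
    intro i
    have hm : d i ^ 2 ∈ s :=
      Finset.mem_union_left _ (Finset.mem_image_of_mem _ (Finset.mem_univ i))
    have := Lagrange.eval_interpolate_at_node (fun t => F (Real.sqrt t)) hinj hm
    simpa [hP, Real.sqrt_sq (hd i)] using this
  have hPe : ∀ i, P.eval (e i ^ 2) = F (e i) := by
    intro i
    have hm : e i ^ 2 ∈ s :=
      Finset.mem_union_right _ (Finset.mem_image_of_mem _ (Finset.mem_univ i))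
    have := Lagrange.eval_interpolate_at_node (fun t => F (Real.sqrt t)) hinj hm
    simpa [hP, Real.sqrt_sq (he i)] using this
  have h1 : matFun U d F = matFun U d (fun x => P.eval (x ^ 2)) :=
    matFun_congr U d fun i => (hPd i).symm
  have h2 : matFun V e F = matFun V e (fun x => P.eval (x ^ 2)) :=
    matFun_congr V e fun i => (hPe i).symm
  rw [h1, h2]
  exact matFun_sq_comm τ B U V d e hU hV hΘ hΘs P

noncomputable def gF (x : ℝ) : ℝ := if x = 0 then 0 else x * (Real.cosh x - 1) / Real.sinh x
noncomputable def sF (x : ℝ) : ℝ := Real.sqrt (gF x)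
noncomputable def rF (x : ℝ) : ℝ := Real.sqrt (coshSubOneDivXSinh x)
noncomputable def dF (x : ℝ) : ℝ := if x = 0 then 1/2 else 0
noncomputable def pF (τ : ℝ) (x : ℝ) : ℝ := if x = 0 then 0 else 8 * τ^2 * rF x / x

lemma L_split (x : ℝ) :
    xCoshDivSinh x = 1/2 * xCoshAddOneDivSinh x + 1/2 * gF x := by
  unfold xCoshDivSinh xCoshAddOneDivSinh gF
  by_cases hx : x = 0
  · simp [hx]
  · simp only [if_neg hx]
    have hs : Real.sinh x ≠ 0 := Real.sinh_ne_zero.mpr hx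
    field_simp
    ring

lemma L_h_nonneg {x : ℝ} (hx : 0 ≤ x) : 0 ≤ coshSubOneDivXSinh x := by
  unfold coshSubOneDivXSinh
  by_cases h : x = 0
  · simp [h]
  · have hx' : 0 < x := lt_of_le_of_ne hx (Ne.symm h)
    rw [if_neg h]
    exact div_nonneg (by linarith [Real.one_le_cosh x])
      (mul_nonneg hx (Real.sinh_pos_iff.mpr hx').le)

lemma L_g_eq {x : ℝ} (hx : 0 ≤ x) : gF x = x^2 * coshSubOneDivXSinh x := by
  unfold gF coshSubOneDivXSinh
  by_cases h : x = 0
  · simp [h]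
  · have hs : Real.sinh x ≠ 0 := Real.sinh_ne_zero.mpr h
    rw [if_neg h, if_neg h]
    field_simp

lemma L_g_nonneg {x : ℝ} (hx : 0 ≤ x) : 0 ≤ gF x := by
  rw [L_g_eq hx]
  exact mul_nonneg (sq_nonneg x) (L_h_nonneg hx)

lemma L_ss {x : ℝ} (hx : 0 ≤ x) : sF x * sF x = gF x :=
  Real.mul_self_sqrt (L_g_nonneg hx)

lemma L_rr {x : ℝ} (hx : 0 ≤ x) : rF x * rF x = coshSubOneDivXSinh x :=
  Real.mul_self_sqrt (L_h_nonneg hx)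

lemma L_s_eq {x : ℝ} (hx : 0 ≤ x) : sF x = x * rF x := by
  unfold sF rF
  rw [L_g_eq hx, Real.sqrt_mul (sq_nonneg x), Real.sqrt_sq hx]

lemma L_srho (τ : ℝ) {x : ℝ} (hx : 0 ≤ x) :
    sF x * pF τ x = 8 * τ^2 * (coshSubOneDivXSinh x - dF x) := by
  unfold pF dF
  by_cases h : x = 0
  · simp [h, sF, gF, coshSubOneDivXSinh]
  · rw [if_neg h, if_neg h, L_s_eq hx]
    field_simp
    rw [← L_rr hx]
    ring

lemma L_rho_sq (τ : ℝ) {x : ℝ} (hx : 0 ≤ x) :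
    pF τ x * (x * x) * pF τ x = 64 * τ^4 * (coshSubOneDivXSinh x - dF x) := by
  unfold pF dF
  by_cases h : x = 0
  · simp [h, coshSubOneDivXSinh]
  · rw [if_neg h, if_neg h]
    field_simp
    rw [← L_rr hx]
    ring

lemma L_delta_sq (x : ℝ) : dF x * (x * x) * dF x = 0 := by
  unfold dF
  by_cases h : x = 0 <;> simp [h]

lemma L_d_nonneg (x : ℝ) : 0 ≤ dF x := by
  unfold dF; by_cases h : x = 0 <;> simp [h]

end PhiAux
open PhiAux in
/-- Proposition 4(i): Gaussian upper bound for the `n`-dimensional kernel `Φ(τ,Y,a,B)`. -/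
theorem phi_n_dim_gaussian_bound {n : ℕ} (τ : ℝ) (hτ : 0 < τ)
    (Y a : Fin n → ℝ) (B U V : Matrix (Fin n) (Fin n) ℝ) (d e : Fin n → ℝ)
    (hU : U * Uᵀ = 1) (hV : V * Vᵀ = 1)
    (hd : ∀ i, 0 ≤ d i) (he : ∀ i, 0 ≤ e i)
    (hΘ : (U * Matrix.diagonal d * Uᵀ) ^ 2 = (4 * τ ^ 2) • (B * Bᵀ))
    (hΘs : (V * Matrix.diagonal e * Vᵀ) ^ 2 = (4 * τ ^ 2) • (Bᵀ * B)) :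
    (1 / Real.sqrt (4 * π * τ)) ^ n *
        Real.sqrt (Matrix.det (matFun U d xDivSinh)) *
        Real.exp
          (-(1 / (4 * τ)) * (Y ⬝ᵥ (matFun U d xCoshDivSinh *ᵥ Y))
            - 2 * τ * (Y ⬝ᵥ ((matFun U d coshSubOneDivXSinh * B) *ᵥ a))
            - 2 * τ * (a ⬝ᵥ (matFun V e coshSubOneDivXSinh *ᵥ a))) ≤
      (1 / Real.sqrt (4 * π * τ)) ^ n *
        Real.sqrt (Matrix.det (matFun U d xDivSinh)) *
        Real.exp (-(1 / (8 * τ)) * (Y ⬝ᵥ (matFun U d xCoshAddOneDivSinh *ᵥ Y))) := by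
  have hτ' : τ ≠ 0 := ne_of_gt hτ
  have hU' : Uᵀ * U = 1 := mul_eq_one_comm.mp hU
  have hV' : Vᵀ * V = 1 := mul_eq_one_comm.mp hV
  have hcomm : ∀ F : ℝ → ℝ, matFun U d F * B = B * matFun V e F := fun F =>
    matFun_comm τ B U V d e hU hV hd he hΘ hΘs F
  -- abbreviations
  set q1 : ℝ := Y ⬝ᵥ (matFun U d xCoshDivSinh *ᵥ Y) with hq1def
  set q4 : ℝ := Y ⬝ᵥ (matFun U d xCoshAddOneDivSinh *ᵥ Y) with hq4def
  set qg : ℝ := Y ⬝ᵥ (matFun U d gF *ᵥ Y) with hqgdef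
  set qc : ℝ := Y ⬝ᵥ ((B * matFun V e coshSubOneDivXSinh) *ᵥ a) with hqcdef
  set q3 : ℝ := a ⬝ᵥ (matFun V e coshSubOneDivXSinh *ᵥ a) with hq3def
  set qd : ℝ := a ⬝ᵥ (matFun V e dF *ᵥ a) with hqddef
  -- rewrite the middle term of the LHS using the intertwining relation
  have hmid : Y ⬝ᵥ ((matFun U d coshSubOneDivXSinh * B) *ᵥ a) = qc := by
    rw [hcomm coshSubOneDivXSinh]
  -- split of xCoshDivSinh
  have hsplitM : matFun U d xCoshDivSinh
      = (1/2 : ℝ) • matFun U d xCoshAddOneDivSinh + (1/2 : ℝ) • matFun U d gF := by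
    have h0 : matFun U d xCoshDivSinh
        = matFun U d (fun x => 1/2 * xCoshAddOneDivSinh x + 1/2 * gF x) :=
      matFun_congr U d fun i => L_split (d i)
    rw [h0, matFun_add U d (fun x => 1/2 * xCoshAddOneDivSinh x) (fun x => 1/2 * gF x),
      matFun_smul, matFun_smul]
  have hq1 : q1 = 1/2 * q4 + 1/2 * qg := by
    rw [hq1def, hsplitM, Matrix.add_mulVec, dotProduct_add,
      Matrix.smul_mulVec, Matrix.smul_mulVec, dotProduct_smul,
      dotProduct_smul, smul_eq_mul, smul_eq_mul]
  -- the matrix of x*x and BᵀB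
  have hsqV : matFun V e (fun x => x * x) = (4 * τ ^ 2) • (Bᵀ * B) := by
    rw [← hΘs, show V * Matrix.diagonal e * Vᵀ = matFun V e id from rfl, pow_two,
      matFun_mul V e hV']
    exact matFun_congr V e fun i => rfl
  have hBtB : Bᵀ * B = (4 * τ ^ 2)⁻¹ • matFun V e (fun x => x * x) := by
    rw [hsqV, smul_smul, inv_mul_cancel₀ (by positivity), one_smul]
  -- B * N(δ) = 0
  have hBd : B * matFun V e dF = 0 := by
    have hKtK : (B * matFun V e dF)ᵀ * (B * matFun V e dF) = 0 := by
      rw [Matrix.transpose_mul, matFun_transpose]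
      have hassoc : matFun V e dF * Bᵀ * (B * matFun V e dF)
          = matFun V e dF * ((Bᵀ * B) * matFun V e dF) := by
        simp only [Matrix.mul_assoc]
      rw [hassoc, hBtB, Matrix.smul_mul, Matrix.mul_smul,
        matFun_mul V e hV', matFun_mul V e hV']
      have : matFun V e (fun x => dF x * ((fun x => (fun x => x * x) x * dF x) x)) = 0 := by
        rw [show (fun x => dF x * ((fun x => (fun x => x * x) x * dF x) x))
            = (fun x : ℝ => dF x * (x * x * dF x)) from rfl]
        have h0 : matFun V e (fun x : ℝ => dF x * (x * x * dF x))
            = matFun V e (fun _ => 0) :=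
          matFun_congr V e fun i => by
            have := L_delta_sq (e i); rw [← this]; ring
        rw [h0, matFun_zero]
      rw [this, smul_zero]
    have := Matrix.conjTranspose_mul_self_eq_zero (A := B * matFun V e dF)
    rw [Matrix.conjTranspose_eq_transpose_of_trivial] at this
    exact this.mp hKtK
  -- the completing-the-square vector
  set u : Fin n → ℝ := matFun U d sF *ᵥ Y with hu
  set v : Fin n → ℝ := (B * matFun V e (pF τ)) *ᵥ a with hv
  -- u ⬝ u = qg
  have huu : u ⬝ᵥ u = qg := by
    rw [hu, dot_mulVec_self, matFun_transpose, matFun_mul U d hU',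
      matFun_congr U d (G := gF) fun i => L_ss (hd i)]
  -- u ⬝ v = 8τ² qc
  have huv : u ⬝ᵥ v = 8 * τ^2 * qc := by
    have hMs : matFun U d sF * (B * matFun V e (pF τ))
        = (8 * τ^2) • (B * matFun V e coshSubOneDivXSinh) := by
      rw [← Matrix.mul_assoc, hcomm sF, Matrix.mul_assoc, matFun_mul V e hV']
      have h1 : matFun V e (fun x => sF x * pF τ x)
          = matFun V e (fun x => 8 * τ^2 * (coshSubOneDivXSinh x - dF x)) :=
        matFun_congr V e fun i => L_srho τ (he i)
      rw [h1, matFun_smul V e (8 * τ^2) (fun x => coshSubOneDivXSinh x - dF x),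
        matFun_sub, Matrix.mul_smul, Matrix.mul_sub, hBd, sub_zero]
    rw [hu, hv, dot_mulVec_cross, matFun_transpose, Matrix.mulVec_mulVec, hMs,
      Matrix.smul_mulVec, dotProduct_smul, smul_eq_mul]
  -- v ⬝ v = 16τ² (q3 - qd)
  have hvv : v ⬝ᵥ v = 16 * τ^2 * (q3 - qd) := by
    have hK : (B * matFun V e (pF τ))ᵀ * (B * matFun V e (pF τ))
        = (16 * τ^2) • (matFun V e coshSubOneDivXSinh - matFun V e dF) := by
      rw [Matrix.transpose_mul, matFun_transpose]
      have hassoc : matFun V e (pF τ) * Bᵀ * (B * matFun V e (pF τ))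
          = matFun V e (pF τ) * ((Bᵀ * B) * matFun V e (pF τ)) := by
        simp only [Matrix.mul_assoc]
      rw [hassoc, hBtB, Matrix.smul_mul, Matrix.mul_smul,
        matFun_mul V e hV', matFun_mul V e hV']
      have h1 : matFun V e (fun x => pF τ x * ((fun x => (fun x => x * x) x * pF τ x) x))
          = matFun V e (fun x => 64 * τ^4 * (coshSubOneDivXSinh x - dF x)) :=
        matFun_congr V e fun i => by
          have := L_rho_sq τ (he i)
          simp only []
          rw [← this]; ring
      rw [h1, matFun_smul V e (64 * τ^4) (fun x => coshSubOneDivXSinh x - dF x),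
        matFun_sub, smul_smul]
      congr 1
      field_simp
      ring
    rw [hv, dot_mulVec_self, hK, Matrix.smul_mulVec, dotProduct_smul,
      smul_eq_mul, Matrix.sub_mulVec, dotProduct_sub]
  -- expansion of the square
  have hsq : 0 ≤ (u + v) ⬝ᵥ (u + v) := dot_self_nonneg _
  have hexp : (u + v) ⬝ᵥ (u + v) = u ⬝ᵥ u + 2 * (u ⬝ᵥ v) + v ⬝ᵥ v := by
    rw [add_dotProduct, dotProduct_add, dotProduct_add,
      dotProduct_comm v u]
    ring
  -- qd ≥ 0
  have hqd : 0 ≤ qd := by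
    rw [hqddef, matFun_quad]
    exact Finset.sum_nonneg fun i _ => mul_nonneg (L_d_nonneg (e i)) (sq_nonneg _)
  -- the key nonnegativity
  have key : 0 ≤ qg + 16 * τ^2 * qc + 16 * τ^2 * q3 := by
    rw [hexp, huu, huv, hvv] at hsq
    nlinarith [hqd, sq_nonneg τ]
  -- final exponent comparison
  have hE : -(1 / (4 * τ)) * q1 - 2 * τ * qc - 2 * τ * q3
      ≤ -(1 / (8 * τ)) * q4 := by
    have hEq : -(1 / (4 * τ)) * q1 - 2 * τ * qc - 2 * τ * q3
        = -(1 / (8 * τ)) * q4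
          - (1 / (8 * τ)) * (qg + 16 * τ^2 * qc + 16 * τ^2 * q3) := by
      rw [hq1]; field_simp; ring
    rw [hEq]
    have hpos : 0 < 1 / (8 * τ) := by positivity
    nlinarith [mul_nonneg hpos.le key]
  rw [hmid]
  exact mul_le_mul_of_nonneg_left (Real.exp_le_exp.mpr hE) (by positivity)
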